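/- Let V be a real symmetric positive definite m×m matrix, Σ a real symmetric positive semidefinite m×m matrix, and Δ ∈ ℝ^{n×m} a matrix satisfying ‖Δ V^{1/2}‖_F ≤ β for some β ≥ 0, where V^{1/2} is the positive semidefinite square root of V. Then ‖Δ Σ Δᵀ‖_F ≤ β² · tr(V^{-1} Σ). -/

import Mathlib

open Matrix MeasureTheory ProbabilityTheory Filter

/-- Frobenius norm of a real matrix. -/
noncomputable def frob {α β : Type*} [Fintype α] [Fintype β] (A : Matrix α β ℝ) : ℝ :=
  Real.sqrt (∑ i, ∑ j, (A i j) ^ 2)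

/-- Spectral norm (largest singular value) of a real matrix. -/
noncomputable def spec {α β : Type*} [Fintype α] [Fintype β] [DecidableEq β]
    (A : Matrix α β ℝ) : ℝ :=
  ‖LinearMap.toContinuousLinearMap (Matrix.toEuclideanLin A)‖

/-- The positive semidefinite square root of a positive semidefinite real matrix
(junk value `0` if the matrix is not positive semidefinite). -/
noncomputable def msqrt {α : Type*} [Fintype α] [DecidableEq α]
    (M : Matrix α α ℝ) : Matrix α α ℝ :=
  open scoped Classical in
  if h : M.PosSemidef then
    (h.1.eigenvectorUnitary : Matrix α α ℝ) * diagonal (fun i => Real.sqrt (h.1.eigenvalues i)) *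
      (star h.1.eigenvectorUnitary : Matrix α α ℝ)
  else 0

lemma msqrt_mul_self {α : Type*} [Fintype α] [DecidableEq α] {M : Matrix α α ℝ}
    (h : M.PosSemidef) : msqrt M * msqrt M = M := by
  rw [msqrt, dif_pos h]
  set U := h.1.eigenvectorUnitary
  have hU : (star U : Matrix α α ℝ) * U = 1 := Unitary.coe_star_mul_self U
  calc (U : Matrix α α ℝ) * diagonal (fun i => Real.sqrt (h.1.eigenvalues i)) * (star U : Matrix α α ℝ) *
        ((U : Matrix α α ℝ) * diagonal (fun i => Real.sqrt (h.1.eigenvalues i)) * (star U : Matrix α α ℝ))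
        = (U : Matrix α α ℝ) * (diagonal (fun i => Real.sqrt (h.1.eigenvalues i)) *
          ((star U : Matrix α α ℝ) * U) * diagonal (fun i => Real.sqrt (h.1.eigenvalues i))) *
          (star U : Matrix α α ℝ) := by simp only [Matrix.mul_assoc]
    _ = (U : Matrix α α ℝ) * diagonal (RCLike.ofReal ∘ h.1.eigenvalues) * (star U : Matrix α α ℝ) := by
          rw [hU, Matrix.mul_one, diagonal_mul_diagonal]
          congr 2
          congr 1
          funext i
          simp [Real.mul_self_sqrt (h.eigenvalues_nonneg i)]
    _ = M := by
          conv_rhs => rw [h.1.spectral_theorem, Unitary.conjStarAlgAut_apply]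

lemma msqrt_transpose {α : Type*} [Fintype α] [DecidableEq α] {M : Matrix α α ℝ}
    (h : M.PosSemidef) : (msqrt M)ᵀ = msqrt M := by
  rw [← Matrix.conjTranspose_eq_transpose_of_trivial, msqrt, dif_pos h]
  simp only [Matrix.conjTranspose_mul, Matrix.diagonal_conjTranspose, Matrix.mul_assoc]
  simp only [Matrix.star_eq_conjTranspose, Matrix.conjTranspose_conjTranspose, Pi.star_def,
    star_trivial]

/-- Euclidean norm of a real vector. -/
noncomputable def vnorm {α : Type*} [Fintype α] (v : α → ℝ) : ℝ :=
  Real.sqrt (∑ i, (v i) ^ 2)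

lemma frob_nonneg {α β : Type*} [Fintype α] [Fintype β] (A : Matrix α β ℝ) :
    0 ≤ frob A := Real.sqrt_nonneg _

lemma frob_sq {α β : Type*} [Fintype α] [Fintype β] (A : Matrix α β ℝ) :
    (frob A) ^ 2 = ∑ i, ∑ j, (A i j) ^ 2 := by
  rw [frob, Real.sq_sqrt]
  positivity

lemma frob_mul_le {α β γ : Type*} [Fintype α] [Fintype β] [Fintype γ]
    (A : Matrix α β ℝ) (B : Matrix β γ ℝ) :
    frob (A * B) ≤ frob A * frob B := by
  have h1 : (frob (A * B)) ^ 2 ≤ (frob A * frob B) ^ 2 := by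
    rw [frob_sq, mul_pow, frob_sq, frob_sq]
    calc ∑ i, ∑ k, ((A * B) i k) ^ 2
        ≤ ∑ i, ∑ k, (∑ j, (A i j) ^ 2) * (∑ j, (B j k) ^ 2) := by
          apply Finset.sum_le_sum; intro i _
          apply Finset.sum_le_sum; intro k _
          simpa [Matrix.mul_apply] using
            Finset.sum_mul_sq_le_sq_mul_sq Finset.univ (fun j => A i j) (fun j => B j k)
      _ = (∑ i, ∑ j, (A i j) ^ 2) * (∑ j, ∑ k, (B j k) ^ 2) := by
          simp only [← Finset.mul_sum, ← Finset.sum_mul]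
          rw [Finset.sum_comm (f := fun j k => (B j k)^2)]
  exact (pow_le_pow_iff_left₀ (frob_nonneg _) (mul_nonneg (frob_nonneg _) (frob_nonneg _)) two_ne_zero).mp h1

lemma frob_transpose {α β : Type*} [Fintype α] [Fintype β] (A : Matrix α β ℝ) :
    frob Aᵀ = frob A := by
  rw [frob, frob, Finset.sum_comm]
  simp [Matrix.transpose_apply]

lemma sum_sq_eq_trace_mul_transpose {α β : Type*} [Fintype α] [Fintype β] (A : Matrix α β ℝ) :
    ∑ i, ∑ j, (A i j) ^ 2 = (A * Aᵀ).trace := by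
  simp [Matrix.trace, Matrix.mul_apply, Matrix.diag, sq]

theorem weighted_quadratic_term_bound {n m : ℕ}
    (V Sig : Matrix (Fin m) (Fin m) ℝ) (Δ : Matrix (Fin n) (Fin m) ℝ) (β : ℝ)
    (hβ : 0 ≤ β) (hV : V.PosDef) (hSig : Sig.PosSemidef)
    (hΔ : frob (Δ * msqrt V) ≤ β) :
    frob (Δ * Sig * Δᵀ) ≤ β ^ 2 * (V⁻¹ * Sig).trace := by
  classical
  set W := msqrt V with hWdef
  have hWeq : W = msqrt V := hWdef
  have hWW : W * W = V := by rw [hWeq]; exact msqrt_mul_self hV.posSemidef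
  have hWsym : Wᵀ = W := by
    rw [hWeq]; exact msqrt_transpose hV.posSemidef
  have hdet : IsUnit W.det := by
    have hdV : V.det ≠ 0 := hV.det_pos.ne'
    have hmul : W.det * W.det = V.det := by rw [← Matrix.det_mul, hWW]
    exact isUnit_iff_ne_zero.mpr fun h => hdV (by rw [← hmul, h, mul_zero])
  have hΔW : Δ * W * W⁻¹ = Δ := by
    rw [Matrix.mul_assoc, Matrix.mul_nonsing_inv _ hdet, Matrix.mul_one]
  set S := msqrt Sig with hSdef
  have hSS : S * S = Sig := msqrt_mul_self hSig
  have hSsym : Sᵀ = S := msqrt_transpose hSig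
  have key : Δ * Sig * Δᵀ = (Δ * S) * (Δ * S)ᵀ := by
    rw [Matrix.transpose_mul, hSsym, ← hSS]
    simp only [Matrix.mul_assoc]
  have hstep1 : frob (Δ * Sig * Δᵀ) ≤ frob (Δ * S) ^ 2 := by
    rw [key, sq]
    calc frob ((Δ * S) * (Δ * S)ᵀ) ≤ frob (Δ * S) * frob ((Δ * S)ᵀ) := frob_mul_le _ _
      _ = frob (Δ * S) * frob (Δ * S) := by rw [frob_transpose]
  have hstep2 : frob (Δ * S) ≤ β * frob (W⁻¹ * S) := by
    calc frob (Δ * S) = frob ((Δ * W) * (W⁻¹ * S)) := by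
          rw [← Matrix.mul_assoc, hΔW]
      _ ≤ frob (Δ * W) * frob (W⁻¹ * S) := frob_mul_le _ _
      _ ≤ β * frob (W⁻¹ * S) := mul_le_mul_of_nonneg_right hΔ (frob_nonneg _)
  have hWinvsym : (W⁻¹)ᵀ = W⁻¹ := by rw [Matrix.transpose_nonsing_inv, hWsym]
  have htr : frob (W⁻¹ * S) ^ 2 = (V⁻¹ * Sig).trace := by
    rw [frob_sq, sum_sq_eq_trace_mul_transpose]
    have hM : (W⁻¹ * S) * (W⁻¹ * S)ᵀ = W⁻¹ * Sig * W⁻¹ := by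
      rw [Matrix.transpose_mul, hSsym, hWinvsym, ← hSS]
      simp only [Matrix.mul_assoc]
    rw [hM, Matrix.trace_mul_cycle, ← Matrix.mul_inv_rev, hWW]
  calc frob (Δ * Sig * Δᵀ) ≤ frob (Δ * S) ^ 2 := hstep1
    _ ≤ (β * frob (W⁻¹ * S)) ^ 2 := pow_le_pow_left₀ (frob_nonneg _) hstep2 2
    _ = β ^ 2 * (V⁻¹ * Sig).trace := by rw [mul_pow, htr]
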